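/- Let x, w, r : ℤ → ℝ be sequences, let L_isi, N_ch, L, N be positive integers with L ≥ L_isi, and let g : ℤ → ℤ → ℝ satisfy g(m + N_ch, l) = g(m, l) for all m, l, and suppose N_ch divides N and N ≥ L. Suppose the channel relation r(m) = Σ_{l=0}^{L_isi−1} g(m, l)·x(m − l) + w(m) holds for all m ∈ ℤ. Extend g by setting g(m,l) := 0 for l ≥ L_isi and for l < 0. Set M := N − L + 1 and define for each n ∈ ℤ: the N-dimensional vector x⃗[n] with (x⃗[n])_u := x(nN + u) for u ∈ {0,…,N−1}; the M-dimensional vectors r⃗[n] and w⃗[n] with (r⃗[n])_i := r(nN + L − 1 + i) and (w⃗[n])_i := w(nN + L − 1 + i) for i ∈ {0,…,M−1}; and the M × N matrix G with G_{u,v} := g(u + L − 1, L − 1 − v + u) if 0 ≤ v − u < L and G_{u,v} := 0 otherwise. Then for every n ∈ ℤ, r⃗[n] = G · x⃗[n] + w⃗[n] (matrix–vector multiplication). -/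

import Mathlib

open MeasureTheory Matrix

set_option autoImplicit false

/-- Applying the decimated components decomposition with block length
`N` to an LPTV channel `r(m) = Σ_{l<L_isi} g(m,l) x(m−l) + w(m)` (period `N_ch ∣ N`,
memory `L_isi ≤ L ≤ N`), and discarding the first `L−1` outputs of each block,
yields the memoryless MIMO relation `r⃗[n] = G · x⃗[n] + w⃗[n]`, where
`G_{u,v} = g(u+L−1, L−1−v+u)` for `0 ≤ v−u < L` and `0` otherwise. -/
theorem lptv_channel_dcd_mimo_representation
    (x w r : ℤ → ℝ) (Lisi Nch L N : ℕ)
    (hLisi : 0 < Lisi) (hNch : 0 < Nch) (hLpos : 0 < L) (hNpos : 0 < N)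
    (hLge : Lisi ≤ L) (hdvd : Nch ∣ N) (hLN : L ≤ N)
    (g : ℤ → ℤ → ℝ)
    (hper : ∀ m l : ℤ, g (m + (Nch : ℤ)) l = g m l)
    (hzero : ∀ m l : ℤ, (l < 0 ∨ (Lisi : ℤ) ≤ l) → g m l = 0)
    (hch : ∀ m : ℤ, r m = (∑ l ∈ Finset.range Lisi, g m ((l : ℤ)) * x (m - (l : ℤ))) + w m)
    (M : ℕ) (hM : M = N - L + 1)
    (G : Matrix (Fin M) (Fin N) ℝ)
    (hG : ∀ (u : Fin M) (v : Fin N),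
      G u v =
        if ((u : ℕ) : ℤ) ≤ ((v : ℕ) : ℤ) ∧ ((v : ℕ) : ℤ) - ((u : ℕ) : ℤ) < (L : ℤ)
        then g (((u : ℕ) : ℤ) + (L : ℤ) - 1)
               ((L : ℤ) - 1 - ((v : ℕ) : ℤ) + ((u : ℕ) : ℤ))
        else 0) :
    ∀ (n : ℤ) (i : Fin M),
      r (n * (N : ℤ) + (L : ℤ) - 1 + ((i : ℕ) : ℤ)) =
        G.mulVec (fun v : Fin N => x (n * (N : ℤ) + ((v : ℕ) : ℤ))) i
          + w (n * (N : ℤ) + (L : ℤ) - 1 + ((i : ℕ) : ℤ)) := by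
  intro n i
  obtain ⟨c, hc⟩ := hdvd
  -- periodicity for arbitrary integer multiples
  have hper' : ∀ (k m l : ℤ), g (m + k * (Nch : ℤ)) l = g m l := by
    intro k
    induction k using Int.induction_on with
    | zero => simp
    | succ k ih =>
        intro m l
        have h1 : m + ((k : ℤ) + 1) * (Nch : ℤ) = (m + k * Nch) + Nch := by ring
        rw [h1, hper, ih]
    | pred k ih =>
        intro m l
        have h2 := hper (m + (-(k : ℤ) - 1) * Nch) l
        have h1 : m + (-(k : ℤ) - 1) * (Nch : ℤ) + Nch = m + (-(k : ℤ)) * Nch := by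
          ring
        rw [h1] at h2
        rw [← h2]
        exact ih m l
  set m : ℤ := n * (N : ℤ) + (L : ℤ) - 1 + ((i : ℕ) : ℤ) with hm
  have key : ∀ l : ℤ, g (((i : ℕ) : ℤ) + (L : ℤ) - 1) l = g m l := by
    intro l
    have hmeq : m = (((i : ℕ) : ℤ) + (L : ℤ) - 1) + (n * c) * (Nch : ℤ) := by
      rw [hm]
      have : (N : ℤ) = (Nch : ℤ) * (c : ℤ) := by exact_mod_cast congrArg Nat.cast hc
      rw [this]; ring
    rw [hmeq, hper']
  have hiL : (i : ℕ) + L ≤ N := by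
    have := i.isLt
    omega
  -- compute the mulVec entry
  have hmul : G.mulVec (fun v : Fin N => x (n * (N : ℤ) + ((v : ℕ) : ℤ))) i
      = ∑ l ∈ Finset.range Lisi, g m ((l : ℤ)) * x (m - (l : ℤ)) := by
    unfold Matrix.mulVec dotProduct
    have step1 : ∑ v : Fin N, G i v * x (n * (N : ℤ) + ((v : ℕ) : ℤ))
        = ∑ v ∈ Finset.range N, G i ⟨v % N, Nat.mod_lt _ hNpos⟩
            * x (n * (N : ℤ) + ((v % N : ℕ) : ℤ)) := by
      rw [Finset.sum_range fun v => G i ⟨v % N, Nat.mod_lt _ hNpos⟩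
            * x (n * (N : ℤ) + ((v % N : ℕ) : ℤ))]
      apply Finset.sum_congr rfl
      intro v _
      congr 2 <;> simp [Nat.mod_eq_of_lt v.isLt]
    rw [step1]
    have step2 : ∑ v ∈ Finset.range N, G i ⟨v % N, Nat.mod_lt _ hNpos⟩
            * x (n * (N : ℤ) + ((v % N : ℕ) : ℤ))
        = ∑ v ∈ Finset.Ico (i : ℕ) ((i : ℕ) + L),
            G i ⟨v % N, Nat.mod_lt _ hNpos⟩ * x (n * (N : ℤ) + ((v % N : ℕ) : ℤ)) := by
      symm
      apply Finset.sum_subset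
      · intro v hv
        simp only [Finset.mem_Ico] at hv
        simp only [Finset.mem_range]
        omega
      · intro v hvN hv
        simp only [Finset.mem_range] at hvN
        simp only [Finset.mem_Ico] at hv
        have hvmod : v % N = v := Nat.mod_eq_of_lt hvN
        rw [hG]
        simp only [hvmod]
        rw [if_neg, zero_mul]
        push_cast
        omega
    rw [step2, Finset.sum_Ico_eq_sum_range]
    have hLL : (i : ℕ) + L - (i : ℕ) = L := by omega
    rw [hLL]
    rw [← Finset.sum_range_reflect]
    have step3 : ∀ k ∈ Finset.range L,
        G i ⟨((i : ℕ) + (L - 1 - k)) % N, Nat.mod_lt _ hNpos⟩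
            * x (n * (N : ℤ) + ((((i : ℕ) + (L - 1 - k)) % N : ℕ) : ℤ))
        = g m ((k : ℤ)) * x (m - (k : ℤ)) := by
      intro k hk
      simp only [Finset.mem_range] at hk
      have hvlt : (i : ℕ) + (L - 1 - k) < N := by omega
      have hvmod : ((i : ℕ) + (L - 1 - k)) % N = (i : ℕ) + (L - 1 - k) :=
        Nat.mod_eq_of_lt hvlt
      rw [hG]
      simp only [hvmod]
      rw [if_pos]
      · have harg : (L : ℤ) - 1 - (((i : ℕ) + (L - 1 - k) : ℕ) : ℤ) + ((i : ℕ) : ℤ)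
            = (k : ℤ) := by push_cast; omega
        rw [harg, key]
        congr 1
        have hcast : ((((i : ℕ) + (L - 1 - k)) : ℕ) : ℤ)
            = ((i : ℕ) : ℤ) + ((L : ℤ) - 1 - (k : ℤ)) := by omega
        rw [hcast, hm]
        ring
      · push_cast
        omega
    rw [Finset.sum_congr rfl step3]
    symm
    apply Finset.sum_subset
    · exact Finset.range_subset_range.mpr hLge
    · intro l _ hl
      simp only [Finset.mem_range] at hl
      rw [hzero m l (Or.inr (by exact_mod_cast Nat.le_of_not_lt hl)), zero_mul]
  rw [hmul, ← hch]
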